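/- arXiv:math/0609201 — 6 statements merged into one kernel-verified Lean document; each statement's English description precedes it below -/
import Mathlib

section
/- Balancing property of the propensity score (Rosenbaum–Rubin): the covariates X and the treatment indicator Z are conditionally independent given the σ-algebra generated by the propensity score e; that is, conditioning on e, the distribution of any measurable function of the background variables is the same in the treated and untreated groups. -/
open MeasureTheory ProbabilityTheory

/-- Balancing property of the propensity score (Rosenbaum–Rubin): the covariates `X` and the
treatment indicator `Z` are conditionally independent given the σ-algebra generated by the
propensity score `e := 𝔼[Z | σ(X)]`. -/
theorem condIndepFun_covariates_treatment_given_propensity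
    {Ω : Type*} [MeasurableSpace Ω] [StandardBorelSpace Ω]
    (μ : Measure Ω) [IsProbabilityMeasure μ]
    {d : ℕ} (X : Ω → (Fin d → ℝ)) (Z : Ω → ℝ)
    (hX : Measurable X) (hZ : Measurable Z)
    (hZ01 : ∀ ω, Z ω = 0 ∨ Z ω = 1)
    (e : Ω → ℝ) (he : e = μ[Z | MeasurableSpace.comap X inferInstance])
    (hme : MeasurableSpace.comap e inferInstance ≤ ‹MeasurableSpace Ω›) :
    CondIndepFun (MeasurableSpace.comap e inferInstance) hme X Z μ := by
  rw [condIndepFun_iff_condExp_inter_preimage_eq_mul hX hZ]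
  intro s t hs ht
  have hmX_le : (MeasurableSpace.comap X inferInstance) ≤ ‹MeasurableSpace Ω› := hX.comap_le
  have heXm : Measurable[(MeasurableSpace.comap X inferInstance)] e := by
    rw [he]; exact stronglyMeasurable_condExp.measurable
  have hm'X : (MeasurableSpace.comap e inferInstance) ≤ (MeasurableSpace.comap X inferInstance) := heXm.comap_le
  have hem' : Measurable[(MeasurableSpace.comap e inferInstance)] e := Measurable.of_comap_le le_rfl
  have heSM' : StronglyMeasurable[(MeasurableSpace.comap e inferInstance)] e := hem'.stronglyMeasurable
  have heInt : Integrable e μ := he ▸ integrable_condExp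
  have hB : MeasurableSet (Z ⁻¹' {1}) := hZ (measurableSet_singleton 1)
  have hZeq : (Z ⁻¹' {1}).indicator (fun _ => (1:ℝ)) = Z := by
    funext ω; rcases hZ01 ω with h | h <;> simp [Set.indicator, h]
  have hZint : Integrable Z μ := by
    rw [← hZeq]; exact (integrable_const (1:ℝ)).indicator hB
  have hindInt : ∀ S : Set Ω, MeasurableSet S →
      Integrable (S.indicator (fun _ => (1:ℝ))) μ :=
    fun S hS => (integrable_const (1:ℝ)).indicator hS
  -- conditional expectation of Z given σ(e) is e
  have hZe' : μ[Z | (MeasurableSpace.comap e inferInstance)] =ᵐ[μ] e := by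
    calc μ[Z | (MeasurableSpace.comap e inferInstance)] =ᵐ[μ] μ[μ[Z | (MeasurableSpace.comap X inferInstance)] | (MeasurableSpace.comap e inferInstance)] := (condExp_condExp_of_le hm'X hmX_le).symm
      _ = μ[e | (MeasurableSpace.comap e inferInstance)] := by rw [← he]
      _ = e := condExp_of_stronglyMeasurable hme heSM' heInt
  have hZ1' : (μ⟦Z ⁻¹' {1} | (MeasurableSpace.comap e inferInstance)⟧) =ᵐ[μ] e := by rw [hZeq]; exact hZe'
  -- key computation
  have hkey : ∀ A : Set Ω, MeasurableSet[(MeasurableSpace.comap X inferInstance)] A →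
      (μ⟦A ∩ Z ⁻¹' {1} | (MeasurableSpace.comap e inferInstance)⟧) =ᵐ[μ] fun ω => (μ⟦A | (MeasurableSpace.comap e inferInstance)⟧) ω * e ω := by
    intro A hA
    have hA0 : MeasurableSet A := hmX_le A hA
    have h1A : StronglyMeasurable[(MeasurableSpace.comap X inferInstance)] (A.indicator (fun _ => (1:ℝ))) :=
      stronglyMeasurable_const.indicator hA
    have hind : (A ∩ Z ⁻¹' {1}).indicator (fun _ => (1:ℝ))
        = (A.indicator (fun _ => (1:ℝ))) * Z := by
      funext ω
      by_cases hω : ω ∈ A <;> rcases hZ01 ω with h | h <;>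
        simp [Set.indicator, hω, h, Set.mem_inter_iff]
    have hintAZ : Integrable ((A.indicator (fun _ => (1:ℝ))) * Z) μ := by
      rw [← hind]; exact hindInt _ (hA0.inter hB)
    have hAe : (A.indicator (fun _ => (1:ℝ))) * e = A.indicator e := by
      funext ω; by_cases hω : ω ∈ A <;> simp [Set.indicator, hω]
    have hintAe : Integrable ((A.indicator (fun _ => (1:ℝ))) * e) μ := by
      rw [hAe]; exact heInt.indicator hA0
    have step1 : μ[(A.indicator (fun _ => (1:ℝ))) * Z | (MeasurableSpace.comap X inferInstance)]
        =ᵐ[μ] (A.indicator (fun _ => (1:ℝ))) * e := by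
      refine (condExp_mul_of_stronglyMeasurable_left h1A hintAZ hZint).trans ?_
      rw [← he]
    have step3 : μ[(A.indicator (fun _ => (1:ℝ))) * e | (MeasurableSpace.comap e inferInstance)]
        =ᵐ[μ] fun ω => (μ⟦A | (MeasurableSpace.comap e inferInstance)⟧) ω * e ω := by
      have := condExp_mul_of_stronglyMeasurable_left heSM'
        (by rwa [mul_comm] at hintAe) (hindInt A hA0)
      rw [mul_comm] at this
      refine this.trans ?_
      filter_upwards with ω
      simp [mul_comm]
    calc (μ⟦A ∩ Z ⁻¹' {1} | (MeasurableSpace.comap e inferInstance)⟧)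
        = μ[(A.indicator (fun _ => (1:ℝ))) * Z | (MeasurableSpace.comap e inferInstance)] := by rw [hind]
      _ =ᵐ[μ] μ[μ[(A.indicator (fun _ => (1:ℝ))) * Z | (MeasurableSpace.comap X inferInstance)] | (MeasurableSpace.comap e inferInstance)] :=
          (condExp_condExp_of_le hm'X hmX_le).symm
      _ =ᵐ[μ] μ[(A.indicator (fun _ => (1:ℝ))) * e | (MeasurableSpace.comap e inferInstance)] := condExp_congr_ae step1
      _ =ᵐ[μ] fun ω => (μ⟦A | (MeasurableSpace.comap e inferInstance)⟧) ω * e ω := step3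
  have hAX : MeasurableSet[(MeasurableSpace.comap X inferInstance)] (X ⁻¹' s) := ⟨s, hs, rfl⟩
  by_cases h1 : (1:ℝ) ∈ t <;> by_cases h0 : (0:ℝ) ∈ t
  · -- Z⁻¹ t = univ
    have htu : Z ⁻¹' t = Set.univ := by
      ext ω; rcases hZ01 ω with h | h <;> simp [h, h0, h1]
    have hu : (μ⟦(Set.univ : Set Ω) | (MeasurableSpace.comap e inferInstance)⟧) = fun _ => (1:ℝ) := by
      rw [Set.indicator_univ]; exact condExp_const hme 1
    rw [htu, Set.inter_univ, hu]
    filter_upwards with ω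
    simp
  · -- Z⁻¹ t = {Z = 1}
    have htB : Z ⁻¹' t = Z ⁻¹' {1} := by
      ext ω; rcases hZ01 ω with h | h <;> simp [h, h0, h1]
    rw [htB]
    filter_upwards [hkey _ hAX, hZ1'] with ω h₁ h₂
    rw [h₁, h₂]
  · -- Z⁻¹ t = {Z = 0} = (Z⁻¹ {1})ᶜ
    have htB : Z ⁻¹' t = (Z ⁻¹' {1})ᶜ := by
      ext ω; rcases hZ01 ω with h | h <;> simp [h, h0, h1]
    rw [htB]
    set A := X ⁻¹' s
    have hA0 : MeasurableSet A := hmX_le A hAX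
    have hindc : (A ∩ (Z ⁻¹' {1})ᶜ).indicator (fun _ => (1:ℝ))
        = A.indicator (fun _ => (1:ℝ)) - (A ∩ Z ⁻¹' {1}).indicator (fun _ => (1:ℝ)) := by
      funext ω
      by_cases hω : ω ∈ A <;> by_cases hω' : ω ∈ Z ⁻¹' {1} <;>
        simp [Set.indicator, hω, hω']
    have hindc2 : ((Z ⁻¹' {1})ᶜ).indicator (fun _ => (1:ℝ)) = (fun _ => (1:ℝ)) - Z := by
      funext ω; rcases hZ01 ω with h | h <;> simp [Set.indicator, h]
    have hc1 : (μ⟦A ∩ (Z ⁻¹' {1})ᶜ | (MeasurableSpace.comap e inferInstance)⟧)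
        =ᵐ[μ] (μ⟦A | (MeasurableSpace.comap e inferInstance)⟧) - (μ⟦A ∩ Z ⁻¹' {1} | (MeasurableSpace.comap e inferInstance)⟧) := by
      rw [hindc]
      exact condExp_sub (hindInt A hA0) (hindInt _ (hA0.inter hB)) _
    have hc2 : (μ⟦(Z ⁻¹' {1})ᶜ | (MeasurableSpace.comap e inferInstance)⟧) =ᵐ[μ] fun ω => 1 - e ω := by
      rw [hindc2]
      refine (condExp_sub (integrable_const 1) hZint _).trans ?_
      have hcc : μ[(fun _ => (1:ℝ)) | (MeasurableSpace.comap e inferInstance)] = fun _ => (1:ℝ) := condExp_const hme 1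
      filter_upwards [hZe'] with ω hω
      simp [hcc, hω]
    filter_upwards [hc1, hc2, hkey A hAX] with ω h₁ h₂ h₃
    rw [h₁, h₂]
    simp only [Pi.sub_apply]
    rw [h₃]
    ring
  · -- Z⁻¹ t = ∅
    have htu : Z ⁻¹' t = ∅ := by
      ext ω; rcases hZ01 ω with h | h <;> simp [h, h0, h1]
    have hz : (μ⟦(∅ : Set Ω) | (MeasurableSpace.comap e inferInstance)⟧) = fun _ => (0:ℝ) := by
      rw [Set.indicator_empty]
      simpa using condExp_const hme (0:ℝ)
    rw [htu, Set.inter_empty, hz]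
    filter_upwards with ω
    simp
end

section
/- Within a propensity-score stratum, treatment assignment is as-if randomized with probability c: for every real number c and every measurable set A ⊆ ℝ^d, ℙ({X ∈ A} ∩ {Z = 1} ∩ {e = c}) = c · ℙ({X ∈ A} ∩ {e = c}). In particular (taking A = ℝ^d), ℙ({Z = 1} ∩ {e = c}) = c · ℙ({e = c}), so every unit in the stratum {e = c} has probability c of being treated. -/
open MeasureTheory ProbabilityTheory

/-- Within a propensity-score stratum, treatment assignment is as-if randomized with
probability `c`: for every real `c` and every measurable `A ⊆ ℝ^d`,
`ℙ({X ∈ A} ∩ {Z = 1} ∩ {e = c}) = c · ℙ({X ∈ A} ∩ {e = c})`. -/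
theorem prob_treated_inter_propensity_stratum
    {Ω : Type*} [MeasurableSpace Ω] (μ : Measure Ω) [IsProbabilityMeasure μ]
    {d : ℕ} (X : Ω → (Fin d → ℝ)) (Z : Ω → ℝ)
    (hX : Measurable X) (hZ : Measurable Z)
    (hZ01 : ∀ ω, Z ω = 0 ∨ Z ω = 1)
    (e : Ω → ℝ) (he : e = μ[Z | MeasurableSpace.comap X inferInstance])
    (c : ℝ) (A : Set (Fin d → ℝ)) (hA : MeasurableSet A) :
    (μ (X ⁻¹' A ∩ {ω | Z ω = 1} ∩ {ω | e ω = c})).toReal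
      = c * (μ (X ⁻¹' A ∩ {ω | e ω = c})).toReal := by
  have hm : MeasurableSpace.comap X inferInstance ≤ _ := hX.comap_le
  have hZint : Integrable Z μ := by
    refine (integrable_const (1:ℝ)).mono' hZ.aestronglyMeasurable ?_
    filter_upwards with ω
    rcases hZ01 ω with h | h <;> simp [h]
  set S : Set Ω := X ⁻¹' A ∩ {ω | e ω = c} with hS_def
  have hSm : MeasurableSet[MeasurableSpace.comap X inferInstance] S := by
    refine MeasurableSet.inter ⟨A, hA, rfl⟩ ?_
    have hsm : StronglyMeasurable[MeasurableSpace.comap X inferInstance] e := he ▸ stronglyMeasurable_condExp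
    exact hsm.measurable (measurableSet_singleton c)
  have hT : MeasurableSet {ω | Z ω = 1} := hZ (measurableSet_singleton 1)
  haveI : SigmaFinite (μ.trim hm) := by
    haveI : IsFiniteMeasure (μ.trim hm) := isFiniteMeasure_trim hm
    infer_instance
  have key : ∫ x in S, (μ[Z|MeasurableSpace.comap X inferInstance]) x ∂μ = ∫ x in S, Z x ∂μ := setIntegral_condExp hm hZint hSm
  have hL : ∫ x in S, (μ[Z|MeasurableSpace.comap X inferInstance]) x ∂μ = c * (μ S).toReal := by
    rw [← he]
    rw [setIntegral_congr_fun (hm _ hSm) (fun ω hω => hω.2)]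
    simp [setIntegral_const, mul_comm, Measure.real]
  have hR : ∫ x in S, Z x ∂μ = (μ (S ∩ {ω | Z ω = 1})).toReal := by
    have hZind : Z = Set.indicator {ω | Z ω = 1} (fun _ => (1:ℝ)) := by
      funext ω
      rcases hZ01 ω with h | h <;> simp [Set.indicator, h]
    calc ∫ x in S, Z x ∂μ = ∫ x in S, Set.indicator {ω | Z ω = 1} (fun _ => (1:ℝ)) x ∂μ := by
          rw [← hZind]
      _ = ∫ _ in S ∩ {ω | Z ω = 1}, (1:ℝ) ∂μ := setIntegral_indicator hT
      _ = (μ (S ∩ {ω | Z ω = 1})).toReal := by simp [Measure.real]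
  have hset : X ⁻¹' A ∩ {ω | Z ω = 1} ∩ {ω | e ω = c} = S ∩ {ω | Z ω = 1} := by
    ext ω; simp [hS_def]; tauto
  rw [hset, ← hR, ← key, hL]
end

section
/- Unconfoundedness given the covariates descends to the propensity score: if the pair of potential outcomes (Y₀, Y₁) is conditionally independent of the treatment indicator Z given the σ-algebra σ(X) generated by the covariates, then (Y₀, Y₁) is conditionally independent of Z given the σ-algebra σ(e) generated by the propensity score. -/
open MeasureTheory ProbabilityTheory

/-- Abstract form: if `W` is conditionally independent of the `{0,1}`-valued `Z` given a
σ-algebra `mX`, and `e = 𝔼[Z | mX]`, then for any sub-σ-algebra `me ≤ mX` with respect to which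
`e` is strongly measurable, `W` is conditionally independent of `Z` given `me`. -/
theorem condIndepFun_aux_propensity {Ω : Type*} (mX me : MeasurableSpace Ω)
    [mΩ : MeasurableSpace Ω] [StandardBorelSpace Ω]
    (μ : Measure Ω) [IsProbabilityMeasure μ]
    {β : Type*} [MeasurableSpace β]
    (hmX_le : mX ≤ mΩ) (hme_le : me ≤ mΩ) (hme_le_mX : me ≤ mX)
    (W : Ω → β) (Z : Ω → ℝ) (hW : Measurable W) (hZ : Measurable Z)
    (hZ01 : ∀ ω, Z ω = 0 ∨ Z ω = 1)
    (e : Ω → ℝ) (he : e = μ[Z | mX])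
    (he_sm_me : StronglyMeasurable[me] e)
    (hunconf : CondIndepFun mX hmX_le W Z μ) :
    CondIndepFun me hme_le W Z μ := by
  have he_sm_mX : StronglyMeasurable[mX] e := he ▸ stronglyMeasurable_condExp
  have he_int : Integrable e μ := he ▸ integrable_condExp
  have hBmeas : MeasurableSet (Z ⁻¹' {1}) := hZ (measurableSet_singleton 1)
  have hZ_ind : Set.indicator (Z ⁻¹' {1}) (fun _ => (1 : ℝ)) = Z := by
    funext ω
    rcases hZ01 ω with h0 | h1
    · have hω : ω ∉ Z ⁻¹' {1} := by simp [Set.mem_preimage, h0]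
      simp [Set.indicator_of_notMem hω, h0]
    · have hω : ω ∈ Z ⁻¹' {1} := by simp [Set.mem_preimage, h1]
      simp [Set.indicator_of_mem hω, h1]
  -- conditional probability of B given mX is e
  have hB_mX : (μ⟦Z ⁻¹' {1} | mX⟧) = e := by
    show μ[(Z ⁻¹' {1}).indicator (fun _ => (1:ℝ)) | mX] = e
    rw [hZ_ind, ← he]
  -- conditional probability of B given me is e
  have hB_me : (μ⟦Z ⁻¹' {1} | me⟧) =ᵐ[μ] e := by
    show μ[(Z ⁻¹' {1}).indicator (fun _ => (1:ℝ)) | me] =ᵐ[μ] e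
    rw [hZ_ind]
    calc μ[Z | me] =ᵐ[μ] μ[μ[Z | mX] | me] := (condExp_condExp_of_le hme_le_mX hmX_le).symm
      _ = μ[e | me] := by rw [← he]
      _ = e := condExp_of_stronglyMeasurable hme_le he_sm_me he_int
  -- a.e. bound on conditional probabilities
  have hbdd : ∀ (A : Set Ω), ∀ᵐ ω ∂μ, |(μ⟦A | mX⟧) ω| ≤ ((1 : NNReal) : ℝ) := by
    intro A
    refine ae_bdd_condExp_of_ae_bdd (Filter.Eventually.of_forall fun ω => ?_)
    by_cases hω : ω ∈ A <;> simp [Set.indicator_apply, hω]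
  -- key step: descend the product formula from mX to me
  have key : ∀ A : Set Ω, MeasurableSet A →
      (μ⟦A ∩ Z ⁻¹' {1} | mX⟧) =ᵐ[μ] (fun ω => (μ⟦A | mX⟧) ω * e ω) →
      (μ⟦A ∩ Z ⁻¹' {1} | me⟧) =ᵐ[μ] (fun ω => (μ⟦A | me⟧) ω * e ω) := by
    intro A hA hAB
    have hint_g : Integrable (μ⟦A | mX⟧) μ := integrable_condExp
    have hint_eg : Integrable (e * (μ⟦A | mX⟧)) μ := by
      refine Integrable.mono' he_int.norm
        ((he_sm_mX.mono hmX_le).aestronglyMeasurable.mul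
          (stronglyMeasurable_condExp.mono hmX_le).aestronglyMeasurable) ?_
      filter_upwards [hbdd A] with ω hω
      simp only [Pi.mul_apply, Real.norm_eq_abs, abs_mul]
      calc |e ω| * |(μ⟦A | mX⟧) ω| ≤ |e ω| * 1 :=
            mul_le_mul_of_nonneg_left (by simpa using hω) (abs_nonneg _)
        _ = |e ω| := mul_one _
    calc (μ⟦A ∩ Z ⁻¹' {1} | me⟧) =ᵐ[μ] μ[μ⟦A ∩ Z ⁻¹' {1} | mX⟧ | me] :=
          (condExp_condExp_of_le hme_le_mX hmX_le).symm
      _ =ᵐ[μ] μ[(e * (μ⟦A | mX⟧)) | me] := by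
          refine condExp_congr_ae (hAB.trans ?_)
          filter_upwards with ω using mul_comm _ _
      _ =ᵐ[μ] e * μ[μ⟦A | mX⟧ | me] :=
          condExp_mul_of_stronglyMeasurable_left he_sm_me hint_eg hint_g
      _ =ᵐ[μ] fun ω => (μ⟦A | me⟧) ω * e ω := by
          filter_upwards [condExp_condExp_of_le hme_le_mX hmX_le
            (f := A.indicator (fun _ => (1:ℝ)))] with ω hω
          simp only [Pi.mul_apply]
          rw [hω, mul_comm]
  rw [condIndepFun_iff_condExp_inter_preimage_eq_mul (mΩ := mΩ) hW hZ] at hunconf ⊢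
  intro s t hs ht
  have hA : MeasurableSet (W ⁻¹' s) := hW hs
  have hAB_mX : (μ⟦W ⁻¹' s ∩ Z ⁻¹' {1} | mX⟧) =ᵐ[μ]
      fun ω => (μ⟦W ⁻¹' s | mX⟧) ω * e ω := by
    have h := hunconf s {1} hs (measurableSet_singleton 1)
    rw [hB_mX] at h
    exact h
  have hAB_me := key (W ⁻¹' s) hA hAB_mX
  have hind : ∀ (C : Set Ω), MeasurableSet C →
      Integrable (C.indicator (fun _ => (1:ℝ))) μ :=
    fun C hC => (integrable_const 1).indicator hC
  by_cases h1 : (1 : ℝ) ∈ t <;> by_cases h0 : (0 : ℝ) ∈ t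
  · -- Z ⁻¹' t = univ
    have hT : Z ⁻¹' t = Set.univ :=
      Set.eq_univ_of_forall fun ω => by rcases hZ01 ω with h | h <;>
        simp [Set.mem_preimage, h, h0, h1]
    rw [hT, Set.inter_univ]
    have huniv : (μ⟦(Set.univ : Set Ω) | me⟧) = fun _ => (1:ℝ) := by
      show μ[(Set.univ : Set Ω).indicator (fun _ => (1:ℝ)) | me] = _
      rw [Set.indicator_univ]
      exact condExp_const hme_le 1
    rw [huniv]
    filter_upwards with ω using by simp
  · -- Z ⁻¹' t = Z ⁻¹' {1}
    have hT : Z ⁻¹' t = Z ⁻¹' {1} := by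
      ext ω
      rcases hZ01 ω with h | h <;> simp [Set.mem_preimage, h, h0, h1]
    rw [hT]
    filter_upwards [hAB_me, hB_me] with ω hω₁ hω₂
    rw [hω₁, hω₂]
  · -- Z ⁻¹' t = (Z ⁻¹' {1})ᶜ
    have hT : Z ⁻¹' t = (Z ⁻¹' {1})ᶜ := by
      ext ω
      rcases hZ01 ω with h | h <;> simp [Set.mem_preimage, h, h0, h1]
    rw [hT]
    have hindAC : Set.indicator (W ⁻¹' s ∩ (Z ⁻¹' {1})ᶜ) (fun _ => (1:ℝ)) =
        fun ω => (W ⁻¹' s).indicator (fun _ => (1:ℝ)) ω -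
          (W ⁻¹' s ∩ Z ⁻¹' {1}).indicator (fun _ => (1:ℝ)) ω := by
      funext ω
      by_cases hωA : ω ∈ W ⁻¹' s <;> by_cases hωB : ω ∈ Z ⁻¹' {1} <;>
        simp [Set.indicator_apply, hωA, hωB]
    have hindBC : Set.indicator ((Z ⁻¹' {1})ᶜ) (fun _ => (1:ℝ)) =
        fun ω => (1 : ℝ) - (Z ⁻¹' {1}).indicator (fun _ => (1:ℝ)) ω := by
      funext ω
      by_cases hωB : ω ∈ Z ⁻¹' {1} <;> simp [Set.indicator_apply, hωB]
    have hABc : (μ⟦W ⁻¹' s ∩ (Z ⁻¹' {1})ᶜ | me⟧) =ᵐ[μ]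
        fun ω => (μ⟦W ⁻¹' s | me⟧) ω - (μ⟦W ⁻¹' s ∩ Z ⁻¹' {1} | me⟧) ω := by
      show μ[(W ⁻¹' s ∩ (Z ⁻¹' {1})ᶜ).indicator (fun _ => (1:ℝ)) | me] =ᵐ[μ] _
      rw [hindAC]
      exact condExp_sub (hind _ hA) (hind _ (hA.inter hBmeas)) me
    have hBc : (μ⟦(Z ⁻¹' {1})ᶜ | me⟧) =ᵐ[μ] fun ω => 1 - e ω := by
      show μ[((Z ⁻¹' {1})ᶜ).indicator (fun _ => (1:ℝ)) | me] =ᵐ[μ] _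
      rw [hindBC]
      have h := condExp_sub (m := me) (f := fun _ => (1:ℝ))
        (g := (Z ⁻¹' {1}).indicator (fun _ => (1:ℝ)))
        (integrable_const 1) (hind _ hBmeas)
      refine h.trans ?_
      filter_upwards [hB_me] with ω hω
      simp only [Pi.sub_apply]
      rw [condExp_const hme_le, hω]
    filter_upwards [hABc, hBc, hAB_me] with ω hω₁ hω₂ hω₃
    rw [hω₁, hω₂, hω₃]
    ring
  · -- Z ⁻¹' t = ∅
    have hT : Z ⁻¹' t = ∅ := by
      ext ω
      rcases hZ01 ω with h | h <;> simp [Set.mem_preimage, h, h0, h1]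
    rw [hT, Set.inter_empty]
    have hempty : (μ⟦(∅ : Set Ω) | me⟧) = 0 := by
      show μ[(∅ : Set Ω).indicator (fun _ => (1:ℝ)) | me] = 0
      rw [Set.indicator_empty]
      exact condExp_zero
    rw [hempty]
    filter_upwards with ω using by simp

/-- Unconfoundedness given the covariates descends to the propensity score: if `(Y₀, Y₁)` is
conditionally independent of `Z` given `σ(X)`, then `(Y₀, Y₁)` is conditionally independent of
`Z` given `σ(e)`, where `e := 𝔼[Z | σ(X)]` is the propensity score. -/
theorem condIndepFun_potentialOutcomes_treatment_given_propensity
    {Ω : Type*} [MeasurableSpace Ω] [StandardBorelSpace Ω]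
    (μ : Measure Ω) [IsProbabilityMeasure μ]
    {d : ℕ} (X : Ω → (Fin d → ℝ)) (Z : Ω → ℝ) (Y₀ Y₁ : Ω → ℝ)
    (hX : Measurable X) (hZ : Measurable Z) (hY₀ : Measurable Y₀) (hY₁ : Measurable Y₁)
    (hZ01 : ∀ ω, Z ω = 0 ∨ Z ω = 1)
    (e : Ω → ℝ) (he : e = μ[Z | MeasurableSpace.comap X inferInstance])
    (hme : MeasurableSpace.comap e inferInstance ≤ ‹MeasurableSpace Ω›)
    (hunconf : CondIndepFun (MeasurableSpace.comap X inferInstance) hX.comap_le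
      (fun ω => (Y₀ ω, Y₁ ω)) Z μ) :
    CondIndepFun (MeasurableSpace.comap e inferInstance) hme
      (fun ω => (Y₀ ω, Y₁ ω)) Z μ := by
  have he_sm_mX : StronglyMeasurable[MeasurableSpace.comap X inferInstance] e :=
    he ▸ stronglyMeasurable_condExp
  have hme_le_mX : MeasurableSpace.comap e inferInstance ≤
      MeasurableSpace.comap X inferInstance := he_sm_mX.measurable.comap_le
  have he_meas_me : Measurable[MeasurableSpace.comap e inferInstance] e :=
    fun s hs => ⟨s, hs, rfl⟩
  exact condIndepFun_aux_propensity _ _ μ hX.comap_le hme hme_le_mX _ Z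
    (hY₀.prodMk hY₁) hZ hZ01 e he he_meas_me.stronglyMeasurable hunconf
end

section
/- Within-stratum identification of the causal effect (validity of 'cloning' within a propensity-score bin): assume the pair of potential outcomes (Y₀, Y₁) is conditionally independent of Z given σ(X), Y₀ and Y₁ are integrable, and let Y := Z·Y₁ + (1−Z)·Y₀ be the observed outcome. Let c ∈ (0,1) be such that ℙ({e = c}) > 0. Then the difference between the mean observed outcome of treated units in the stratum and the mean observed outcome of untreated units in the stratum equals the mean causal effect in the stratum: (∫_{{Z=1}∩{e=c}} Y dℙ)/ℙ({Z=1} ∩ {e=c}) − (∫_{{Z=0}∩{e=c}} Y dℙ)/ℙ({Z=0} ∩ {e=c}) = (∫_{{e=c}} (Y₁ − Y₀) dℙ)/ℙ({e = c}) (the denominators ℙ({Z=1} ∩ {e=c}) = c·ℙ({e=c}) and ℙ({Z=0} ∩ {e=c}) = (1−c)·ℙ({e=c}) being positive). -/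
open MeasureTheory ProbabilityTheory

lemma aux_setIntegral {Ω : Type*} [MeasurableSpace Ω] (μ : Measure Ω) [IsFiniteMeasure μ]
    {W : Ω → ℝ} (hW : Measurable W)
    {T A : Set Ω} (hT : MeasurableSet T) (hA : MeasurableSet A) {r : ℝ} (hr : 0 ≤ r)
    (h : ∀ s : Set ℝ, MeasurableSet s →
      μ (W ⁻¹' s ∩ (T ∩ A)) = ENNReal.ofReal r * μ (W ⁻¹' s ∩ A)) :
    ∫ ω in T ∩ A, W ω ∂μ = r * ∫ ω in A, W ω ∂μ := by
  have hmap : (μ.restrict (T ∩ A)).map W = ENNReal.ofReal r • (μ.restrict A).map W := by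
    ext s hs
    rw [Measure.map_apply hW hs, Measure.smul_apply, Measure.map_apply hW hs,
      Measure.restrict_apply (hW hs), Measure.restrict_apply (hW hs), h s hs, smul_eq_mul]
  have h1 : ∫ ω in T ∩ A, W ω ∂μ = ∫ x, x ∂((μ.restrict (T ∩ A)).map W) :=
    (integral_map hW.aemeasurable aestronglyMeasurable_id).symm
  have h2 : ∫ ω in A, W ω ∂μ = ∫ x, x ∂((μ.restrict A).map W) :=
    (integral_map hW.aemeasurable aestronglyMeasurable_id).symm
  rw [h1, hmap, integral_smul_measure, ← h2, ENNReal.toReal_ofReal hr, smul_eq_mul]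

lemma aux_measure {Ω : Type*} {m mΩ : MeasurableSpace Ω} (hm : m ≤ mΩ) (μ : Measure Ω)
    [IsFiniteMeasure μ] {B T A : Set Ω} (hB : MeasurableSet B) (hT : MeasurableSet T)
    (hAm : MeasurableSet[m] A) {r : ℝ} (hr : 0 ≤ r) {g : Ω → ℝ}
    (hBT : (μ⟦B ∩ T|m⟧) =ᵐ[μ] fun ω => (μ⟦B|m⟧) ω * g ω)
    (hgA : ∀ ω ∈ A, g ω = r) :
    μ (B ∩ T ∩ A) = ENNReal.ofReal r * μ (B ∩ A) := by
  have hA : MeasurableSet A := hm _ hAm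
  have hreal : (μ (B ∩ T ∩ A)).toReal = r * (μ (B ∩ A)).toReal := by
    calc (μ (B ∩ T ∩ A)).toReal
        = ∫ ω in A, (B ∩ T).indicator (fun _ => (1:ℝ)) ω ∂μ := by
          rw [integral_indicator_const (1:ℝ) (hB.inter hT), measureReal_restrict_apply (hB.inter hT),
            smul_eq_mul, mul_one, measureReal_def]
      _ = ∫ ω in A, (μ⟦B ∩ T|m⟧) ω ∂μ :=
          (setIntegral_condExp hm ((integrable_const (1:ℝ)).indicator (hB.inter hT)) hAm).symm
      _ = ∫ ω in A, (μ⟦B|m⟧) ω * r ∂μ := by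
          refine setIntegral_congr_ae hA ?_
          filter_upwards [hBT] with ω hω hmem
          rw [hω, hgA ω hmem]
      _ = r * ∫ ω in A, (μ⟦B|m⟧) ω ∂μ := by
          rw [integral_mul_const, mul_comm]
      _ = r * ∫ ω in A, B.indicator (fun _ => (1:ℝ)) ω ∂μ := by
          rw [setIntegral_condExp hm ((integrable_const (1:ℝ)).indicator hB) hAm]
      _ = r * (μ (B ∩ A)).toReal := by
          rw [integral_indicator_const (1:ℝ) hB, measureReal_restrict_apply hB, smul_eq_mul, mul_one, measureReal_def]
  rw [← ENNReal.ofReal_toReal (measure_ne_top μ (B ∩ T ∩ A)),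
    ← ENNReal.ofReal_toReal (measure_ne_top μ (B ∩ A)), hreal, ENNReal.ofReal_mul hr]

/-- Within-stratum identification of the causal effect (validity of "cloning" within a
propensity-score bin): under unconfoundedness given `σ(X)`, for `c ∈ (0,1)` with
`ℙ({e = c}) > 0`, the difference of the mean observed outcome between treated and untreated
units in the stratum `{e = c}` equals the mean causal effect in that stratum. -/
theorem within_stratum_identification
    {Ω : Type*} [MeasurableSpace Ω] [StandardBorelSpace Ω]
    (μ : Measure Ω) [IsProbabilityMeasure μ]
    {d : ℕ} (X : Ω → (Fin d → ℝ)) (Z : Ω → ℝ) (Y₀ Y₁ : Ω → ℝ)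
    (hX : Measurable X) (hZ : Measurable Z) (hY₀ : Measurable Y₀) (hY₁ : Measurable Y₁)
    (hZ01 : ∀ ω, Z ω = 0 ∨ Z ω = 1)
    (hY₀int : Integrable Y₀ μ) (hY₁int : Integrable Y₁ μ)
    (e : Ω → ℝ) (he : e = μ[Z | MeasurableSpace.comap X inferInstance])
    (hunconf : CondIndepFun (MeasurableSpace.comap X inferInstance) hX.comap_le
      (fun ω => (Y₀ ω, Y₁ ω)) Z μ)
    (Y : Ω → ℝ) (hY : Y = fun ω => Z ω * Y₁ ω + (1 - Z ω) * Y₀ ω)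
    (c : ℝ) (hc0 : 0 < c) (hc1 : c < 1)
    (hpos : 0 < μ {ω | e ω = c}) :
    (∫ ω in {ω | Z ω = 1} ∩ {ω | e ω = c}, Y ω ∂μ)
        / (μ ({ω | Z ω = 1} ∩ {ω | e ω = c})).toReal
      - (∫ ω in {ω | Z ω = 0} ∩ {ω | e ω = c}, Y ω ∂μ)
        / (μ ({ω | Z ω = 0} ∩ {ω | e ω = c})).toReal
      = (∫ ω in {ω | e ω = c}, (Y₁ ω - Y₀ ω) ∂μ) / (μ {ω | e ω = c}).toReal := by
  have hm : MeasurableSpace.comap X inferInstance ≤ ‹MeasurableSpace Ω› := hX.comap_le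
  set A := {ω | e ω = c} with hA_def
  set T := {ω | Z ω = 1} with hT_def
  set T' := {ω | Z ω = 0} with hT'_def
  have hT : MeasurableSet T := hZ (measurableSet_singleton 1)
  have hT' : MeasurableSet T' := hZ (measurableSet_singleton 0)
  have hem : StronglyMeasurable[MeasurableSpace.comap X inferInstance] e := by
    rw [he]; exact stronglyMeasurable_condExp
  have hAm : MeasurableSet[MeasurableSpace.comap X inferInstance] A :=
    hem.measurable (measurableSet_singleton c)
  have hA : MeasurableSet A := hm _ hAm
  -- Z as indicators
  have hZindT : Set.indicator T (fun _ => (1:ℝ)) = Z := by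
    funext ω
    rcases hZ01 ω with h | h
    · have hω : ω ∉ T := by simp [hT_def, h]
      simp [hω, h]
    · have hω : ω ∈ T := h
      simp [hω, h]
  have hZindT' : Set.indicator T' (fun _ => (1:ℝ)) = fun ω => 1 - Z ω := by
    funext ω
    rcases hZ01 ω with h | h
    · have hω : ω ∈ T' := h
      simp [hω, h]
    · have hω : ω ∉ T' := by simp [hT'_def, h]
      simp [hω, h]
  have hZint : Integrable Z μ := hZindT ▸ (integrable_const (1:ℝ)).indicator hT
  -- conditional expectations of the treatment indicators
  have hcT : (μ⟦T|MeasurableSpace.comap X inferInstance⟧) =ᵐ[μ] e := by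
    rw [show Set.indicator T (fun _ => (1:ℝ)) = Z from hZindT, he]
  have hcT' : (μ⟦T'|MeasurableSpace.comap X inferInstance⟧) =ᵐ[μ] fun ω => 1 - e ω := by
    rw [show Set.indicator T' (fun _ => (1:ℝ)) = (fun _ => (1:ℝ)) - Z from hZindT']
    calc μ[(fun _ => (1:ℝ)) - Z|MeasurableSpace.comap X inferInstance]
        =ᵐ[μ] μ[fun _ => (1:ℝ)|MeasurableSpace.comap X inferInstance]
            - μ[Z|MeasurableSpace.comap X inferInstance] :=
          condExp_sub (integrable_const 1) hZint _
      _ = fun ω => 1 - e ω := by rw [condExp_const hm, he]; rfl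
  -- conditional independence
  have hpair : Measurable (fun ω => (Y₀ ω, Y₁ ω)) := hY₀.prodMk hY₁
  have hind := (condIndepFun_iff_condExp_inter_preimage_eq_mul (hm' := hm) hpair hZ).mp hunconf
  -- key measure identities
  have key1 : ∀ s : Set ℝ, MeasurableSet s →
      μ (Y₁ ⁻¹' s ∩ (T ∩ A)) = ENNReal.ofReal c * μ (Y₁ ⁻¹' s ∩ A) := by
    intro s hs
    have hpre : (fun ω => (Y₀ ω, Y₁ ω)) ⁻¹' (Set.univ ×ˢ s) = Y₁ ⁻¹' s := by
      ext ω; simp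
    have h1 := hind (Set.univ ×ˢ s) {1} (MeasurableSet.univ.prod hs) (measurableSet_singleton 1)
    rw [hpre] at h1
    have hZpre : Z ⁻¹' {1} = T := rfl
    rw [hZpre] at h1
    have hBT : (μ⟦Y₁ ⁻¹' s ∩ T|MeasurableSpace.comap X inferInstance⟧) =ᵐ[μ]
        fun ω => (μ⟦Y₁ ⁻¹' s|MeasurableSpace.comap X inferInstance⟧) ω * e ω := by
      filter_upwards [h1, hcT] with ω h1ω h2ω
      rw [h1ω, h2ω]
    rw [← Set.inter_assoc]
    exact aux_measure hm μ (hY₁ hs) hT hAm hc0.le hBT (fun ω hω => hω)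
  have key0 : ∀ s : Set ℝ, MeasurableSet s →
      μ (Y₀ ⁻¹' s ∩ (T' ∩ A)) = ENNReal.ofReal (1 - c) * μ (Y₀ ⁻¹' s ∩ A) := by
    intro s hs
    have hpre : (fun ω => (Y₀ ω, Y₁ ω)) ⁻¹' (s ×ˢ Set.univ) = Y₀ ⁻¹' s := by
      ext ω; simp
    have h1 := hind (s ×ˢ Set.univ) {0} (hs.prod MeasurableSet.univ) (measurableSet_singleton 0)
    rw [hpre] at h1
    have hZpre : Z ⁻¹' {0} = T' := rfl
    rw [hZpre] at h1
    have hBT : (μ⟦Y₀ ⁻¹' s ∩ T'|MeasurableSpace.comap X inferInstance⟧) =ᵐ[μ]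
        fun ω => (μ⟦Y₀ ⁻¹' s|MeasurableSpace.comap X inferInstance⟧) ω * (1 - e ω) := by
      filter_upwards [h1, hcT'] with ω h1ω h2ω
      rw [h1ω, h2ω]
    rw [← Set.inter_assoc]
    exact aux_measure hm μ (hY₀ hs) hT' hAm (by linarith) hBT
      (fun ω hω => by rw [show e ω = c from hω])
  -- measures of the strata
  have hμT : μ (T ∩ A) = ENNReal.ofReal c * μ A := by
    have := key1 Set.univ MeasurableSet.univ
    simpa using this
  have hμT' : μ (T' ∩ A) = ENNReal.ofReal (1 - c) * μ A := by
    have := key0 Set.univ MeasurableSet.univ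
    simpa using this
  -- observed outcome on strata
  have hYT : ∫ ω in T ∩ A, Y ω ∂μ = ∫ ω in T ∩ A, Y₁ ω ∂μ := by
    refine setIntegral_congr_fun (hT.inter hA) (fun ω hω => ?_)
    have h1 : Z ω = 1 := hω.1
    simp [hY, h1]
  have hYT' : ∫ ω in T' ∩ A, Y ω ∂μ = ∫ ω in T' ∩ A, Y₀ ω ∂μ := by
    refine setIntegral_congr_fun (hT'.inter hA) (fun ω hω => ?_)
    have h1 : Z ω = 0 := hω.1
    simp [hY, h1]
  have hInt1 : ∫ ω in T ∩ A, Y₁ ω ∂μ = c * ∫ ω in A, Y₁ ω ∂μ :=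
    aux_setIntegral μ hY₁ hT hA hc0.le key1
  have hInt0 : ∫ ω in T' ∩ A, Y₀ ω ∂μ = (1 - c) * ∫ ω in A, Y₀ ω ∂μ :=
    aux_setIntegral μ hY₀ hT' hA (by linarith) key0
  -- final computation
  have hμTr : (μ (T ∩ A)).toReal = c * (μ A).toReal := by
    rw [hμT, ENNReal.toReal_mul, ENNReal.toReal_ofReal hc0.le]
  have hμT'r : (μ (T' ∩ A)).toReal = (1 - c) * (μ A).toReal := by
    rw [hμT', ENNReal.toReal_mul, ENNReal.toReal_ofReal (by linarith)]
  rw [hYT, hYT', hInt1, hInt0, hμTr, hμT'r,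
    integral_sub hY₁int.integrableOn hY₀int.integrableOn,
    mul_div_mul_left _ _ hc0.ne', mul_div_mul_left _ _ (by linarith : (1:ℝ) - c ≠ 0), sub_div]
end

section
/- Sufficiency direction of the balancing-score characterization (Rosenbaum–Rubin): let b : ℝ^d → ℝ^k be measurable. If the propensity score is determined by b(X), in the sense that 𝔼[Z | σ(X)] = 𝔼[Z | σ(b ∘ X)] ℙ-a.e., then b(X) is a balancing score: the covariates X and the treatment indicator Z are conditionally independent given σ(b ∘ X). -/
open MeasureTheory ProbabilityTheory

/-- Sufficiency direction of the balancing-score characterization (Rosenbaum–Rubin): if the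
propensity score is determined by `b(X)`, i.e. `𝔼[Z | σ(X)] = 𝔼[Z | σ(b ∘ X)]` a.e., then
`b(X)` is a balancing score: `X` and `Z` are conditionally independent given `σ(b ∘ X)`. -/
theorem balancingScore_of_condexp_eq
    {Ω : Type*} [MeasurableSpace Ω] [StandardBorelSpace Ω]
    (μ : Measure Ω) [IsProbabilityMeasure μ]
    {d k : ℕ} (X : Ω → (Fin d → ℝ)) (Z : Ω → ℝ) (b : (Fin d → ℝ) → (Fin k → ℝ))
    (hX : Measurable X) (hZ : Measurable Z) (hb : Measurable b)
    (hZ01 : ∀ ω, Z ω = 0 ∨ Z ω = 1)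
    (hdet : μ[Z | MeasurableSpace.comap X inferInstance]
      =ᵐ[μ] μ[Z | MeasurableSpace.comap (b ∘ X) inferInstance]) :
    CondIndepFun (MeasurableSpace.comap (b ∘ X) inferInstance) (hb.comp hX).comap_le X Z μ := by
  set m' : MeasurableSpace Ω := MeasurableSpace.comap (b ∘ X) inferInstance with hm'def
  set mX : MeasurableSpace Ω := MeasurableSpace.comap X inferInstance with hmXdef
  have hm'X : m' ≤ mX := by
    rintro s ⟨t, ht, rfl⟩
    exact ⟨b ⁻¹' t, hb ht, rfl⟩
  have hmX : mX ≤ _ := hX.comap_le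
  have hm' : m' ≤ _ := (hb.comp hX).comap_le
  -- Z is bounded
  have hZbd : ∀ ω, ‖Z ω‖ ≤ 1 := by
    intro ω; rcases hZ01 ω with h | h <;> simp [h]
  have hZint : Integrable Z μ :=
    (integrable_const (1 : ℝ)).mono' hZ.aestronglyMeasurable (ae_of_all _ hZbd)
  rw [condIndepFun_iff_condExp_inter_preimage_eq_mul hX hZ]
  intro A B hA hB
  -- indicator functions
  set f : Ω → ℝ := (X ⁻¹' A).indicator (fun _ => (1:ℝ)) with hfdef
  have hfbd : ∀ ω, ‖f ω‖ ≤ 1 := by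
    intro ω; rw [hfdef]; by_cases h : ω ∈ X ⁻¹' A <;> simp [Set.indicator_apply, h]
  have hf_meas : StronglyMeasurable[mX] f := by
    refine StronglyMeasurable.indicator stronglyMeasurable_const ?_
    exact ⟨A, hA, rfl⟩
  have hfaesm := (hf_meas.mono hmX).aestronglyMeasurable (μ := μ)
  have hfint : Integrable f μ :=
    (integrable_const (1 : ℝ)).mono' hfaesm (ae_of_all _ hfbd)
  have hfZint : Integrable (f * Z) μ :=
    hZint.bdd_mul hfaesm (ae_of_all _ hfbd)
  -- key: μ[f * Z | m'] = μ[Z|m'] * μ[f|m']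
  have key : μ[f * Z | m'] =ᵐ[μ] μ[Z | m'] * μ[f | m'] := by
    have h1 : μ[f * Z | m'] =ᵐ[μ] μ[μ[f * Z | mX] | m'] :=
      (condExp_condExp_of_le hm'X hmX).symm
    have h2 : μ[f * Z | mX] =ᵐ[μ] f * μ[Z | mX] :=
      condExp_mul_of_stronglyMeasurable_left hf_meas hfZint hZint
    have h3 : f * μ[Z | mX] =ᵐ[μ] μ[Z | m'] * f := by
      filter_upwards [hdet] with ω hω
      simp only [Pi.mul_apply, hω, mul_comm]
    have h4 : μ[μ[f * Z | mX] | m'] =ᵐ[μ] μ[μ[Z | m'] * f | m'] :=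
      condExp_congr_ae (h2.trans h3)
    have hZ'int : Integrable (μ[Z | m']) μ := integrable_condExp
    have hZ'f_int : Integrable (μ[Z | m'] * f) μ :=
      (hZ'int.bdd_mul hfaesm (ae_of_all _ hfbd)).congr
        (ae_of_all _ fun ω => mul_comm _ _)
    have h5 : μ[μ[Z | m'] * f | m'] =ᵐ[μ] μ[Z | m'] * μ[f | m'] :=
      condExp_mul_of_stronglyMeasurable_left stronglyMeasurable_condExp hZ'f_int hfint
    exact (h1.trans h4).trans h5
  -- decompose indicator of B ∘ Z
  set c0 : ℝ := B.indicator (fun _ => (1:ℝ)) 0 with hc0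
  set c1 : ℝ := B.indicator (fun _ => (1:ℝ)) 1 with hc1
  have hgdecomp : (Z ⁻¹' B).indicator (fun _ => (1:ℝ))
      = fun ω => c0 + (c1 - c0) * Z ω := by
    funext ω
    rcases hZ01 ω with h | h
    · by_cases hB0 : (0:ℝ) ∈ B <;>
        simp [Set.indicator_apply, Set.mem_preimage, h, hB0, hc0]
    · by_cases hB1 : (1:ℝ) ∈ B <;>
        simp [Set.indicator_apply, Set.mem_preimage, h, hB1, hc1, hc0]
  have hinter : (X ⁻¹' A ∩ Z ⁻¹' B).indicator (fun _ => (1:ℝ))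
      = fun ω => f ω * (c0 + (c1 - c0) * Z ω) := by
    funext ω
    have : (X ⁻¹' A ∩ Z ⁻¹' B).indicator (fun _ => (1:ℝ)) ω
        = f ω * (Z ⁻¹' B).indicator (fun _ => (1:ℝ)) ω := by
      by_cases h1 : ω ∈ X ⁻¹' A <;> by_cases h2 : ω ∈ Z ⁻¹' B <;>
        simp [Set.indicator_apply, h1, h2, hfdef]
    rw [this, hgdecomp]
  -- condexp of LHS
  have hLHS : μ[(X ⁻¹' A ∩ Z ⁻¹' B).indicator (fun _ => (1:ℝ)) | m']
      =ᵐ[μ] fun ω => c0 * (μ[f | m']) ω + (c1 - c0) * ((μ[Z | m']) ω * (μ[f | m']) ω) := by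
    have heq : (X ⁻¹' A ∩ Z ⁻¹' B).indicator (fun _ => (1:ℝ))
        = (c0 • f) + ((c1 - c0) • (f * Z)) := by
      funext ω; rw [hinter]; simp [Pi.add_apply, Pi.smul_apply, smul_eq_mul]; ring
    rw [heq]
    have hadd := condExp_add (μ := μ) (m := m') (hfint.smul c0) (hfZint.smul (c1 - c0))
    refine hadd.trans ?_
    have hs1 : μ[c0 • f | m'] =ᵐ[μ] c0 • μ[f | m'] := condExp_smul c0 f m'
    have hs2 : μ[(c1 - c0) • (f * Z) | m'] =ᵐ[μ] (c1 - c0) • μ[f * Z | m'] :=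
      condExp_smul (c1 - c0) (f * Z) m'
    filter_upwards [hs1, hs2, key] with ω h1 h2 h3
    simp only [Pi.add_apply, h1, h2, Pi.smul_apply, smul_eq_mul]
    rw [h3]
    simp [Pi.mul_apply]
  -- condexp of Z-indicator
  have hZB : μ[(Z ⁻¹' B).indicator (fun _ => (1:ℝ)) | m']
      =ᵐ[μ] fun ω => c0 + (c1 - c0) * (μ[Z | m']) ω := by
    have heq : (Z ⁻¹' B).indicator (fun _ => (1:ℝ))
        = (fun _ => c0) + ((c1 - c0) • Z) := by
      funext ω; rw [hgdecomp]; simp [smul_eq_mul]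
    rw [heq]
    have hadd := condExp_add (μ := μ) (m := m') (integrable_const c0) (hZint.smul (c1 - c0))
    refine hadd.trans ?_
    have hs1 : μ[(fun _ : Ω => c0) | m'] = fun _ => c0 := condExp_const hm' c0
    have hs2 : μ[(c1 - c0) • Z | m'] =ᵐ[μ] (c1 - c0) • μ[Z | m'] := condExp_smul (c1 - c0) Z m'
    filter_upwards [hs2] with ω h2
    simp only [Pi.add_apply, hs1, h2, Pi.smul_apply, smul_eq_mul]
  -- conclude
  filter_upwards [hLHS, hZB] with ω h1 h2
  simp only [MeasureTheory.condExp] at *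
  rw [h1, h2]
  ring
end

section
/- Necessity direction of the balancing-score characterization (Rosenbaum–Rubin): let b : ℝ^d → ℝ^k be measurable. If b(X) is a balancing score, i.e., the covariates X and the treatment indicator Z are conditionally independent given σ(b ∘ X), then the propensity score is determined by b(X): 𝔼[Z | σ(X)] = 𝔼[Z | σ(b ∘ X)] ℙ-a.e. In particular the propensity score is the coarsest balancing score. -/
open MeasureTheory ProbabilityTheory

/-- Necessity direction of the balancing-score characterization (Rosenbaum–Rubin): if `b(X)` is a
balancing score, i.e. `X` and `Z` are conditionally independent given `σ(b ∘ X)`, then the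
propensity score is determined by `b(X)`: `𝔼[Z | σ(X)] = 𝔼[Z | σ(b ∘ X)]` a.e. -/
theorem condexp_eq_of_balancingScore
    {Ω : Type*} [MeasurableSpace Ω] [StandardBorelSpace Ω]
    (μ : Measure Ω) [IsProbabilityMeasure μ]
    {d k : ℕ} (X : Ω → (Fin d → ℝ)) (Z : Ω → ℝ) (b : (Fin d → ℝ) → (Fin k → ℝ))
    (hX : Measurable X) (hZ : Measurable Z) (hb : Measurable b)
    (hZ01 : ∀ ω, Z ω = 0 ∨ Z ω = 1)
    (hbal : CondIndepFun (MeasurableSpace.comap (b ∘ X) inferInstance)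
      (hb.comp hX).comap_le X Z μ) :
    μ[Z | MeasurableSpace.comap X inferInstance]
      =ᵐ[μ] μ[Z | MeasurableSpace.comap (b ∘ X) inferInstance] := by
  have hm' := (hb.comp hX).comap_le
  have hmX := hX.comap_le
  have hm'X : MeasurableSpace.comap (b ∘ X) inferInstance
      ≤ MeasurableSpace.comap X inferInstance := by
    intro s hs
    obtain ⟨t, ht, rfl⟩ := hs
    exact ⟨b ⁻¹' t, hb ht, (Set.preimage_comp).symm⟩
  -- `Z` is the indicator of `(Z ⁻¹' {1})`
  have hBmeas : MeasurableSet (Z ⁻¹' {1}) := hZ (measurableSet_singleton 1)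
  have hZind : Z = (Z ⁻¹' {1}).indicator fun _ => (1 : ℝ) := by
    funext ω
    rcases hZ01 ω with h | h
    · rw [Set.indicator_of_notMem (by simp [h]), h]
    · rw [Set.indicator_of_mem (by simp [h]), h]
  have hZint : Integrable Z μ := by
    rw [hZind]; exact (integrable_const (1 : ℝ)).indicator hBmeas
  -- the conditional independence hypothesis, unfolded
  have hkey := (condIndepFun_iff _ hm' X Z hX hZ μ).mp hbal
  have hgdef : (μ[Z | MeasurableSpace.comap (b ∘ X) inferInstance]) = μ[Z | MeasurableSpace.comap (b ∘ X) inferInstance] := rfl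
  have hgint : Integrable (μ[Z | MeasurableSpace.comap (b ∘ X) inferInstance]) μ := integrable_condExp
  have hgsm : StronglyMeasurable[MeasurableSpace.comap (b ∘ X) inferInstance] (μ[Z | MeasurableSpace.comap (b ∘ X) inferInstance]) := stronglyMeasurable_condExp
  -- main computation
  have hmain : ∀ s : Set Ω, MeasurableSet[MeasurableSpace.comap X inferInstance] s →
      ∫ x in s, (μ[Z | MeasurableSpace.comap (b ∘ X) inferInstance]) x ∂μ = ∫ x in s, Z x ∂μ := by
    intro s hs
    have hs0 : MeasurableSet s := hmX s hs
    set χ : Ω → ℝ := s.indicator fun _ => (1 : ℝ) with hχdef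
    have hχint : Integrable χ μ := (integrable_const (1 : ℝ)).indicator hs0
    have hgχint : Integrable ((μ[Z | MeasurableSpace.comap (b ∘ X) inferInstance]) * χ) μ := by
      refine Integrable.mono hgint
        ((hgsm.mono hm').aestronglyMeasurable.mul hχint.aestronglyMeasurable) ?_
      refine Filter.Eventually.of_forall fun x => ?_
      have : |χ x| ≤ 1 := by
        rw [hχdef]
        by_cases hx : x ∈ s <;> simp [hx]
      calc ‖((μ[Z | MeasurableSpace.comap (b ∘ X) inferInstance]) * χ) x‖ = ‖(μ[Z | MeasurableSpace.comap (b ∘ X) inferInstance]) x‖ * |χ x| := by simp [abs_mul, Real.norm_eq_abs]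
        _ ≤ ‖(μ[Z | MeasurableSpace.comap (b ∘ X) inferInstance]) x‖ * 1 := by gcongr
        _ = ‖(μ[Z | MeasurableSpace.comap (b ∘ X) inferInstance]) x‖ := mul_one _
    have h1 : ∫ x in s, (μ[Z | MeasurableSpace.comap (b ∘ X) inferInstance]) x ∂μ = ∫ x, ((μ[Z | MeasurableSpace.comap (b ∘ X) inferInstance]) * χ) x ∂μ := by
      rw [← integral_indicator hs0]
      congr 1
      funext x
      by_cases hx : x ∈ s <;> simp [hχdef, hx]
    have h2 : ∫ x, ((μ[Z | MeasurableSpace.comap (b ∘ X) inferInstance]) * χ) x ∂μ = ∫ x, (μ[(μ[Z | MeasurableSpace.comap (b ∘ X) inferInstance]) * χ | MeasurableSpace.comap (b ∘ X) inferInstance]) x ∂μ :=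
      (integral_condExp hm').symm
    have h3 : μ[(μ[Z | MeasurableSpace.comap (b ∘ X) inferInstance]) * χ | MeasurableSpace.comap (b ∘ X) inferInstance] =ᵐ[μ] (μ[Z | MeasurableSpace.comap (b ∘ X) inferInstance]) * μ[χ | MeasurableSpace.comap (b ∘ X) inferInstance] :=
      condExp_mul_of_stronglyMeasurable_left hgsm hgχint hχint
    -- conditional independence: χ is the indicator of s ∈ σ(X), (Z ⁻¹' {1}) ∈ σ(Z)
    have hsmem : MeasurableSet[MeasurableSpace.comap X inferInstance] s := hs
    have hBmem : MeasurableSet[MeasurableSpace.comap Z inferInstance] (Z ⁻¹' {1}) :=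
      ⟨{1}, measurableSet_singleton 1, rfl⟩
    have hCI : (μ⟦s ∩ (Z ⁻¹' {1}) | MeasurableSpace.comap (b ∘ X) inferInstance⟧) =ᵐ[μ] (μ⟦s | MeasurableSpace.comap (b ∘ X) inferInstance⟧) * (μ⟦(Z ⁻¹' {1}) | MeasurableSpace.comap (b ∘ X) inferInstance⟧) := hkey s (Z ⁻¹' {1}) hsmem hBmem
    have hgB : (μ[Z | MeasurableSpace.comap (b ∘ X) inferInstance]) = μ⟦(Z ⁻¹' {1}) | MeasurableSpace.comap (b ∘ X) inferInstance⟧ := by conv_lhs => rw [hZind]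
    have h4 : (μ[Z | MeasurableSpace.comap (b ∘ X) inferInstance]) * μ[χ | MeasurableSpace.comap (b ∘ X) inferInstance] =ᵐ[μ] μ⟦s ∩ (Z ⁻¹' {1}) | MeasurableSpace.comap (b ∘ X) inferInstance⟧ := by
      rw [hgB]
      calc (μ⟦(Z ⁻¹' {1}) | MeasurableSpace.comap (b ∘ X) inferInstance⟧) * μ[χ | MeasurableSpace.comap (b ∘ X) inferInstance] = (μ⟦s | MeasurableSpace.comap (b ∘ X) inferInstance⟧) * (μ⟦(Z ⁻¹' {1}) | MeasurableSpace.comap (b ∘ X) inferInstance⟧) := mul_comm _ _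
        _ =ᵐ[μ] μ⟦s ∩ (Z ⁻¹' {1}) | MeasurableSpace.comap (b ∘ X) inferInstance⟧ := hCI.symm
    have h5 : ∫ x, (μ⟦s ∩ (Z ⁻¹' {1}) | MeasurableSpace.comap (b ∘ X) inferInstance⟧) x ∂μ = ∫ x, (s ∩ (Z ⁻¹' {1})).indicator (fun _ => (1:ℝ)) x ∂μ :=
      integral_condExp hm'
    have h6 : ∫ x, (s ∩ (Z ⁻¹' {1})).indicator (fun _ => (1:ℝ)) x ∂μ = ∫ x in s, Z x ∂μ := by
      conv_rhs => rw [hZind]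
      rw [← Set.indicator_indicator, integral_indicator hs0]
    calc ∫ x in s, (μ[Z | MeasurableSpace.comap (b ∘ X) inferInstance]) x ∂μ = ∫ x, (μ[(μ[Z | MeasurableSpace.comap (b ∘ X) inferInstance]) * χ | MeasurableSpace.comap (b ∘ X) inferInstance]) x ∂μ := by rw [h1, h2]
      _ = ∫ x, ((μ[Z | MeasurableSpace.comap (b ∘ X) inferInstance]) * μ[χ | MeasurableSpace.comap (b ∘ X) inferInstance]) x ∂μ := integral_congr_ae h3
      _ = ∫ x, (μ⟦s ∩ (Z ⁻¹' {1}) | MeasurableSpace.comap (b ∘ X) inferInstance⟧) x ∂μ := integral_congr_ae h4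
      _ = ∫ x in s, Z x ∂μ := by rw [h5, h6]
  refine (ae_eq_condExp_of_forall_setIntegral_eq hmX hZint
    (fun s _ _ => hgint.integrableOn)
    (fun s hs _ => hmain s hs)
    ((hgsm.mono hm'X).aestronglyMeasurable)).symm
end
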